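/- Moll's minimum conjecture in the b-form: for every integer m ≥ 2, the expression (m+i)(m+1−i) b_{i-1}(m)² + i(i+1) b_i(m)² − i(2m+1) b_{i-1}(m) b_i(m), for 1 ≤ i ≤ m, attains its minimum at i = m with value 2^{2m} m(m+1) C(2m,m)². -/

import Mathlib

noncomputable def b (m i : ℕ) : ℚ :=
  ∑ k ∈ Finset.Icc i m,
    (2:ℚ)^k * (Nat.choose (2*m-2*k) (m-k)) * (Nat.choose (m+k) k) * (Nat.choose k i)

noncomputable def E (m i : ℕ) : ℚ :=
  ((m:ℚ)+(i:ℚ))*((m:ℚ)+1-(i:ℚ)) * (b m (i-1))^2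
    + (i:ℚ)*((i:ℚ)+1) * (b m i)^2
    - (i:ℚ)*(2*(m:ℚ)+1) * b m (i-1) * b m i

lemma b_nonneg (m i : ℕ) : 0 ≤ b m i := by
  unfold b
  apply Finset.sum_nonneg
  intro k _
  positivity

lemma central (m : ℕ) (hm : 1 ≤ m) :
    (Nat.choose (2*m) m : ℚ) = 2 * (Nat.choose (2*m-1) (m-1)) := by
  have h := Nat.add_one_mul_choose_eq (2*m-1) (m-1)
  have h1 : 2*m-1+1 = 2*m := by omega
  have h2 : m-1+1 = m := by omega
  rw [h1, h2] at h
  have h3 : (2*m : ℚ) * (Nat.choose (2*m-1) (m-1)) = (Nat.choose (2*m) m) * m := by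
    exact_mod_cast congrArg (Nat.cast : ℕ → ℚ) h
  have hm0 : (m:ℚ) ≠ 0 := by positivity
  have h4 : (Nat.choose (2*m) m : ℚ) * m = (2 * (Nat.choose (2*m-1) (m-1))) * m := by
    linarith [h3]
  exact mul_right_cancel₀ hm0 h4

lemma b_top (m : ℕ) : b m m = 2^m * (Nat.choose (2*m) m) := by
  unfold b
  rw [Finset.Icc_self, Finset.sum_singleton]
  rw [show 2*m-2*m = 0 by omega, show m-m = 0 by omega, show m+m = 2*m by ring]
  simp

lemma b_pred (m : ℕ) (hm : 1 ≤ m) :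
    b m (m-1) = 2^m * (2*(m:ℚ)+1) * (Nat.choose (2*m) m) / 2 := by
  unfold b
  have hIcc : Finset.Icc (m-1) m = {m-1, m} := by
    ext x; simp [Finset.mem_Icc]; omega
  rw [hIcc, Finset.sum_pair (by omega : m-1 ≠ m)]
  rw [show 2*m-2*(m-1) = 2 by omega, show m-(m-1) = 1 by omega,
    show m+(m-1) = 2*m-1 by omega, show 2*m-2*m = 0 by omega, show m-m = 0 by omega,
    show m+m = 2*m by ring, Nat.choose_self, Nat.choose_self,
    Nat.choose_symm hm, Nat.choose_one_right, Nat.choose_one_right]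
  have hc : (Nat.choose (2*m-1) (m-1) : ℚ) = (Nat.choose (2*m) m) / 2 := by
    rw [central m hm]; ring
  rw [hc]
  have h2 : (2:ℚ)^(m-1) = 2^m / 2 := by
    rw [pow_sub₀ (2:ℚ) two_ne_zero hm, pow_one]; ring
  rw [h2]
  push_cast
  ring

lemma b_ge (m i : ℕ) (h : i ≤ m) :
    (Nat.choose m i : ℚ) * (2^m * (Nat.choose (2*m) m)) ≤ b m i := by
  unfold b
  have hmem : m ∈ Finset.Icc i m := by simp [h]
  have := Finset.single_le_sum
    (f := fun k => (2:ℚ)^k * (Nat.choose (2*m-2*k) (m-k)) * (Nat.choose (m+k) k) * (Nat.choose k i))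
    (fun k _ => by positivity) hmem
  calc (Nat.choose m i : ℚ) * (2^m * (Nat.choose (2*m) m))
      = (2:ℚ)^m * (Nat.choose (2*m-2*m) (m-m)) * (Nat.choose (m+m) m) * (Nat.choose m i) := by
        rw [show 2*m-2*m = 0 by omega, show m-m = 0 by omega, show m+m = 2*m by ring]
        simp; ring
    _ ≤ _ := this

lemma b_one_ge (m : ℕ) (hm : 2 ≤ m) :
    (3*(m:ℚ)-1) * (2^m * (Nat.choose (2*m) m)) / 2 ≤ b m 1 := by
  unfold b
  have hsub : ({m-1, m} : Finset ℕ) ⊆ Finset.Icc 1 m := by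
    intro x; simp [Finset.mem_Icc]; omega
  have hle := Finset.sum_le_sum_of_subset_of_nonneg hsub
    (f := fun k => (2:ℚ)^k * (Nat.choose (2*m-2*k) (m-k)) * (Nat.choose (m+k) k) * (Nat.choose k 1))
    (fun k _ _ => by positivity)
  refine le_trans ?_ hle
  rw [Finset.sum_pair (by omega : m-1 ≠ m)]
  rw [show 2*m-2*(m-1) = 2 by omega, show m-(m-1) = 1 by omega,
    show m+(m-1) = 2*m-1 by omega, show 2*m-2*m = 0 by omega, show m-m = 0 by omega,
    show m+m = 2*m by ring, Nat.choose_one_right, Nat.choose_one_right,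
    Nat.choose_one_right]
  have hc : (Nat.choose (2*m-1) (m-1) : ℚ) = (Nat.choose (2*m) m) / 2 := by
    rw [central m (by omega)]; ring
  rw [hc]
  have h2 : (2:ℚ)^(m-1) = 2^m / 2 := by
    rw [pow_sub₀ (2:ℚ) two_ne_zero (by omega : 1 ≤ m), pow_one]; ring
  rw [h2]
  have hc1 : ((m-1 : ℕ) : ℚ) = (m:ℚ) - 1 := by
    push_cast [Nat.cast_sub (by omega : 1 ≤ m)]; ring
  rw [hc1]
  apply le_of_eq
  rw [show Nat.choose 0 0 = 1 from rfl]
  push_cast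
  ring

lemma ratio (m i : ℕ) (h1 : 1 ≤ i) (h2 : i ≤ m) :
    (i:ℚ) * b m i ≤ ((m:ℚ)+1-(i:ℚ)) * b m (i-1) := by
  unfold b
  rw [Finset.mul_sum, Finset.mul_sum]
  have hsub : Finset.Icc i m ⊆ Finset.Icc (i-1) m := by
    intro x; simp [Finset.mem_Icc]; omega
  have step1 : ∀ k ∈ Finset.Icc i m,
      (i:ℚ) * ((2:ℚ)^k * (Nat.choose (2*m-2*k) (m-k)) * (Nat.choose (m+k) k) * (Nat.choose k i))
      ≤ ((m:ℚ)+1-(i:ℚ)) * ((2:ℚ)^k * (Nat.choose (2*m-2*k) (m-k)) * (Nat.choose (m+k) k) * (Nat.choose k (i-1))) := by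
    intro k hk
    rw [Finset.mem_Icc] at hk
    have hck : (i:ℚ) * (Nat.choose k i) ≤ ((m:ℚ)+1-(i:ℚ)) * (Nat.choose k (i-1)) := by
      have h := Nat.choose_succ_right_eq k (i-1)
      rw [show i-1+1 = i by omega] at h
      have hq : (Nat.choose k i : ℚ) * i = (Nat.choose k (i-1)) * ((k:ℚ) - ((i:ℚ)-1)) := by
        have := congrArg (Nat.cast : ℕ → ℚ) h
        push_cast [Nat.cast_sub (by omega : i-1 ≤ k)] at this
        convert this using 2
        push_cast [Nat.cast_sub (by omega : 1 ≤ i)]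
        ring
      have hkm : ((k:ℚ) - ((i:ℚ)-1)) ≤ (m:ℚ)+1-(i:ℚ) := by
        have : (k:ℚ) ≤ m := by exact_mod_cast hk.2
        linarith
      have hcn : (0:ℚ) ≤ (Nat.choose k (i-1) : ℚ) := by positivity
      nlinarith [hq, hkm, hcn]
    have hpos : (0:ℚ) ≤ (2:ℚ)^k * (Nat.choose (2*m-2*k) (m-k)) * (Nat.choose (m+k) k) := by
      positivity
    calc (i:ℚ) * ((2:ℚ)^k * (Nat.choose (2*m-2*k) (m-k)) * (Nat.choose (m+k) k) * (Nat.choose k i))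
        = ((2:ℚ)^k * (Nat.choose (2*m-2*k) (m-k)) * (Nat.choose (m+k) k)) * ((i:ℚ) * (Nat.choose k i)) := by ring
      _ ≤ ((2:ℚ)^k * (Nat.choose (2*m-2*k) (m-k)) * (Nat.choose (m+k) k)) * (((m:ℚ)+1-(i:ℚ)) * (Nat.choose k (i-1))) :=
          mul_le_mul_of_nonneg_left hck hpos
      _ = ((m:ℚ)+1-(i:ℚ)) * ((2:ℚ)^k * (Nat.choose (2*m-2*k) (m-k)) * (Nat.choose (m+k) k) * (Nat.choose k (i-1))) := by ring
  refine le_trans (Finset.sum_le_sum step1) ?_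
  apply Finset.sum_le_sum_of_subset_of_nonneg hsub
  intro k _ _
  have : (0:ℚ) ≤ (m:ℚ)+1-(i:ℚ) := by
    have : (i:ℚ) ≤ m := by exact_mod_cast h2
    linarith
  positivity

lemma E_ge (m i : ℕ) (h1 : 1 ≤ i) (h2 : i ≤ m) :
    (i:ℚ) * (b m i)^2 ≤ E m i := by
  have hr := ratio m i h1 h2
  have hx := b_nonneg m (i-1)
  have hy := b_nonneg m i
  have key : E m i = (i:ℚ)*(b m i)^2
      + (((m:ℚ)+1-(i:ℚ))*b m (i-1) - (i:ℚ)*b m i)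
        * (((m:ℚ)+(i:ℚ))*b m (i-1) - (i:ℚ)*b m i) := by
    unfold E; ring
  have f1 : 0 ≤ ((m:ℚ)+1-(i:ℚ))*b m (i-1) - (i:ℚ)*b m i := by linarith
  have hi1 : (1:ℚ) ≤ (i:ℚ) := by exact_mod_cast h1
  have f2 : 0 ≤ ((m:ℚ)+(i:ℚ))*b m (i-1) - (i:ℚ)*b m i := by
    nlinarith [mul_nonneg (by linarith : (0:ℚ) ≤ 2*(i:ℚ)-1) hx]
  nlinarith [mul_nonneg f1 f2]

lemma le_choose_nat (m i : ℕ) (h1 : 1 ≤ i) (h2 : i < m) : m ≤ Nat.choose m i := by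
  induction m generalizing i with
  | zero => omega
  | succ n ih =>
    obtain ⟨j, rfl⟩ : ∃ j, i = j+1 := ⟨i-1, by omega⟩
    rcases eq_or_lt_of_le (by omega : j+1 ≤ n) with h | h
    · rw [h, Nat.choose_succ_self_right]
    · have hrec := Nat.choose_succ_succ n j
      have hp : 1 ≤ Nat.choose n j := Nat.choose_pos (by omega)
      have h2' : n ≤ n.choose (j+1) := ih (j+1) (by omega) h
      simp only [Nat.succ_eq_add_one] at hrec
      omega

lemma Emm (m : ℕ) (hm : 1 ≤ m) :
    E m m = (m:ℚ)*((m:ℚ)+1)*(2^m * (Nat.choose (2*m) m))^2 := by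
  unfold E
  rw [b_top, b_pred m hm]
  ring

theorem stmt16 (m : ℕ) (hm : 2 ≤ m) :
    (∀ i : ℕ, 1 ≤ i → i ≤ m → E m m ≤ E m i)
    ∧ E m m = (2:ℚ)^(2*m) * m * (m+1) * (Nat.choose (2*m) m : ℚ)^2 := by
  have hE := Emm m (by omega)
  constructor
  · intro i h1 h2
    rcases eq_or_lt_of_le h2 with rfl | hlt
    · exact le_refl _
    · -- i < m
      have hEi := E_ge m i h1 h2
      set c : ℚ := 2^m * (Nat.choose (2*m) m) with hc
      have hc0 : (0:ℚ) ≤ c := by rw [hc]; positivity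
      rcases eq_or_lt_of_le h1 with rfl | hi2
      · -- i = 1
        have hb1 : (3*(m:ℚ)-1) * c / 2 ≤ b m 1 := by rw [hc]; exact b_one_ge m hm
        have hb1n : (0:ℚ) ≤ b m 1 := b_nonneg m 1
        have hmq : (2:ℚ) ≤ (m:ℚ) := by exact_mod_cast hm
        have h0 : (0:ℚ) ≤ (3*(m:ℚ)-1) * c / 2 := by
          apply div_nonneg _ (by norm_num)
          apply mul_nonneg (by linarith) hc0
        have hsq : ((3*(m:ℚ)-1) * c / 2)^2 ≤ (b m 1)^2 := pow_le_pow_left₀ h0 hb1 2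
        have key : (m:ℚ)*((m:ℚ)+1)*c^2 ≤ ((3*(m:ℚ)-1) * c / 2)^2 := by
          nlinarith [mul_nonneg (mul_nonneg (by linarith : (0:ℚ) ≤ (m:ℚ)-2)
            (by linarith : (0:ℚ) ≤ (m:ℚ))) (sq_nonneg c)]
        have hEi' : (1:ℚ) * (b m 1)^2 ≤ E m 1 := by exact_mod_cast hEi
        rw [hE]
        linarith
      · -- 2 ≤ i < m
        have hbge : (Nat.choose m i : ℚ) * c ≤ b m i := by rw [hc]; exact b_ge m i h2
        have hch : (m:ℚ) ≤ (Nat.choose m i : ℚ) := by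
          exact_mod_cast le_choose_nat m i h1 hlt
        have hiq : (2:ℚ) ≤ (i:ℚ) := by exact_mod_cast hi2
        have hmq : (2:ℚ) ≤ (m:ℚ) := by exact_mod_cast hm
        have hbn : (0:ℚ) ≤ b m i := b_nonneg m i
        have hsq : ((Nat.choose m i : ℚ) * c)^2 ≤ (b m i)^2 :=
          pow_le_pow_left₀ (by positivity) hbge 2
        have s2 : ((m:ℚ)*c)^2 ≤ ((Nat.choose m i : ℚ) * c)^2 :=
          pow_le_pow_left₀ (by positivity) (mul_le_mul_of_nonneg_right hch hc0) 2
        have s1 : (m:ℚ)*((m:ℚ)+1)*c^2 ≤ 2*((m:ℚ)*c)^2 := by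
          nlinarith [mul_nonneg (mul_nonneg (show (0:ℚ) ≤ (m:ℚ) by positivity)
            (show (0:ℚ) ≤ (m:ℚ)-1 by linarith)) (sq_nonneg c)]
        have s4 : 2*(b m i)^2 ≤ (i:ℚ)*(b m i)^2 :=
          mul_le_mul_of_nonneg_right hiq (sq_nonneg _)
        rw [hE]
        linarith
  · rw [hE, two_mul, pow_add]
    ring
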